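/- For any prime p ≥ 5, sum_{k=0}^{(p-1)/2} C(2k,k)^2/(16^k*(k+1)) * H_k ≡ 4*(1 - (-1)^{(p-1)/2}) (mod p), where H_k is the k-th harmonic number. -/

import Mathlib

/-- The `n`-th harmonic number `H_n = ∑_{j=1}^n 1/j`. -/
def H (n : ℕ) : ℚ := ∑ j ∈ Finset.range n, 1 / (j + 1 : ℚ)


lemma rat_cast_eq_div {p : ℕ} [Fact p.Prime] (x : ℚ) (a b : ℤ)
    (hb : (b : ZMod p) ≠ 0) (h : x * (b : ℚ) = (a : ℚ)) :
    (x : ZMod p) = (a : ZMod p) / (b : ZMod p) := by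
  have hb0 : (b : ℚ) ≠ 0 := by
    intro h0
    apply hb
    have : b = 0 := by exact_mod_cast h0
    simp [this]
  have hx : x = (a : ℚ) / (b : ℚ) := by field_simp at h ⊢; linarith [h]
  have hdvd : (x.den : ℤ) ∣ b := by
    rw [hx, ← Rat.divInt_eq_div]
    exact Rat.den_dvd a b
  have hden : ((x.den : ℕ) : ZMod p) ≠ 0 := by
    intro h0
    apply hb
    obtain ⟨c, hc⟩ := hdvd
    rw [hc]
    push_cast
    rw [h0, zero_mul]
  have hnum : (x.num : ℚ) * b = a * (x.den : ℚ) := by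
    rw [← Rat.num_div_den x] at hx
    field_simp at hx
    push_cast
    linear_combination hx
  have hZ : x.num * b = a * (x.den : ℤ) := by exact_mod_cast hnum
  have hzm : ((x.num : ZMod p)) * b = a * (x.den : ℕ) := by
    have := congrArg (Int.cast : ℤ → ZMod p) hZ
    push_cast at this
    exact this
  rw [Rat.cast_def]
  rw [div_eq_div_iff hden hb]
  linear_combination hzm


lemma H_succ (n : ℕ) : H (n+1) = H n + 1/(n+1 : ℚ) := by
  simp [H, Finset.sum_range_succ]

lemma cb_rec (n : ℕ) :
    ((n:ℚ)+2) * ((2*(n+2)).choose (n+2) : ℚ) = 2*(2*(n:ℚ)+3) * ((2*(n+1)).choose (n+1) : ℚ) := by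
  have := Nat.succ_mul_centralBinom_succ (n+1)
  have h2 : ((n+2) * Nat.centralBinom (n+2) : ℕ) = (2 * (2*(n+1)+1) * Nat.centralBinom (n+1) : ℕ) := this
  have := congrArg (Nat.cast : ℕ → ℚ) h2
  push_cast [Nat.centralBinom] at this
  push_cast
  linear_combination this

lemma qid (n : ℕ) :
    ∑ k ∈ Finset.range (n+1), ((2*k).choose k : ℚ)^2 / (16^k * (k+1)) * H k
    = 4*((n:ℚ)+1) * ((2*(n+1)).choose (n+1) : ℚ)^2 / 16^(n+1) * H n
      - 4 * ∑ k ∈ Finset.range (n+1), ((2*k).choose k : ℚ)^2 / 16^k + 4 := by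
  induction n with
  | zero => simp [H]
  | succ n ih =>
    rw [Finset.sum_range_succ, Finset.sum_range_succ ((fun k => ((2*k).choose k : ℚ)^2 / 16^k)), ih,
      H_succ]
    have key := cb_rec n
    have hb : ((2*(n+1)).choose (n+1) : ℚ) ≠ 0 := by
      have : 0 < (2*(n+1)).choose (n+1) := Nat.choose_pos (by omega)
      exact_mod_cast this.ne'
    have h16 : (16:ℚ) ≠ 0 := by norm_num
    have hn1 : ((n:ℚ)+1) ≠ 0 := by positivity
    have hn2 : ((n:ℚ)+2) ≠ 0 := by positivity
    have hB : ((2*(n+2)).choose (n+2) : ℚ) = 2*(2*(n:ℚ)+3) * ((2*(n+1)).choose (n+1) : ℚ) / ((n:ℚ)+2) := by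
      field_simp
      linear_combination key
    push_cast [hB]
    field_simp
    ring

section
variable {p : ℕ} [hp : Fact p.Prime] (m : ℕ) (hm : p = 2*m+1)

lemma nz_of_lt {j : ℕ} (h0 : 0 < j) (hj : j < p) : (j : ZMod p) ≠ 0 := by
  rw [Ne, ZMod.natCast_eq_zero_iff]
  intro hd
  exact absurd (Nat.le_of_dvd h0 hd) (by omega)

include hm in
lemma Z1 : ∀ k, k ≤ m → ((2*k).choose k : ZMod p) = (-4)^k * (m.choose k : ZMod p) := by
  intro k
  induction k with
  | zero => simp
  | succ k ih =>
    intro hk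
    have ihk := ih (by omega)
    have hrec := Nat.succ_mul_centralBinom_succ k
    have h1 : ((k+1) * ((2*(k+1)).choose (k+1)) : ℕ) = (2 * (2*k+1) * ((2*k).choose k) : ℕ) := hrec
    have h2 := Nat.choose_succ_right_eq m k
    have c1 : ((k:ZMod p)+1) * ((2*(k+1)).choose (k+1) : ZMod p)
        = 2 * (2*(k:ZMod p)+1) * ((2*k).choose k : ZMod p) := by
      have := congrArg (Nat.cast : ℕ → ZMod p) h1
      push_cast at this
      linear_combination this
    have c2 : ((m.choose (k+1)) : ZMod p) * ((k:ZMod p)+1)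
        = (m.choose k : ZMod p) * ((m:ZMod p) - k) := by
      have := congrArg (Nat.cast : ℕ → ZMod p) h2
      push_cast [Nat.cast_sub (by omega : k ≤ m)] at this
      linear_combination this
    have hmp : (2*(m:ZMod p)+1) = 0 := by
      have : ((2*m+1:ℕ) : ZMod p) = 0 := by rw [← hm]; exact ZMod.natCast_self p
      push_cast at this
      linear_combination this
    have hk1 : ((k:ZMod p)+1) ≠ 0 := by
      have := nz_of_lt (p := p) (j := k+1) (by omega) (by omega)
      push_cast at this
      exact this
    apply mul_left_cancel₀ hk1
    calc ((k:ZMod p)+1) * ((2*(k+1)).choose (k+1) : ZMod p)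
        = 2 * (2*(k:ZMod p)+1) * ((2*k).choose k : ZMod p) := c1
      _ = 2 * (2*(k:ZMod p)+1) * ((-4)^k * (m.choose k : ZMod p)) := by rw [ihk]
      _ = ((k:ZMod p)+1) * ((-4)^(k+1) * (m.choose (k+1) : ZMod p)) := by
          have : (2 * (2*(k:ZMod p)+1)) = (-4) * ((m:ZMod p) - k) := by linear_combination 2 * hmp
          rw [this]
          linear_combination (-(-4:ZMod p)^(k+1)) * c2

lemma Z2 : (2*m).choose m = ∑ k ∈ Finset.range (m+1), (m.choose k)^2 := by
  rw [two_mul, Nat.add_choose_eq]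
  rw [Finset.Nat.sum_antidiagonal_eq_sum_range_succ (fun i j => m.choose i * m.choose j)]
  refine Finset.sum_congr rfl fun k hk => ?_
  rw [Finset.mem_range] at hk
  rw [Nat.choose_symm (by omega : k ≤ m)]
  ring

include hm in
lemma Z3 : ∀ k, k ≤ 2*m → ((2*m).choose k : ZMod p) = (-1)^k := by
  intro k
  induction k with
  | zero => simp
  | succ k ih =>
    intro hk
    have ihk := ih (by omega)
    have h2 := Nat.choose_succ_right_eq (2*m) k
    have c2 : (((2*m).choose (k+1)) : ZMod p) * ((k:ZMod p)+1)
        = ((2*m).choose k : ZMod p) * (2*(m:ZMod p) - k) := by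
      have := congrArg (Nat.cast : ℕ → ZMod p) h2
      push_cast [Nat.cast_sub (by omega : k ≤ 2*m)] at this
      linear_combination this
    have hmp : (2*(m:ZMod p)+1) = 0 := by
      have : ((2*m+1:ℕ) : ZMod p) = 0 := by rw [← hm]; exact ZMod.natCast_self p
      push_cast at this
      linear_combination this
    have hk1 : ((k:ZMod p)+1) ≠ 0 := by
      have := nz_of_lt (p := p) (j := k+1) (by omega) (by omega)
      push_cast at this
      exact this
    apply mul_left_cancel₀ hk1
    calc ((k:ZMod p)+1) * (((2*m).choose (k+1)) : ZMod p)
        = ((2*m).choose k : ZMod p) * (2*(m:ZMod p) - k) := by linear_combination c2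
      _ = (-1)^k * (2*(m:ZMod p) - k) := by rw [ihk]
      _ = ((k:ZMod p)+1) * (-1)^(k+1) := by
          have : 2*(m:ZMod p) - k = (-1) * ((k:ZMod p)+1) := by linear_combination hmp
          rw [this]; ring
end

theorem stmt6 (p : ℕ) [hp : Fact p.Prime] (hp5 : 5 ≤ p) :
    (((∑ k ∈ Finset.range ((p - 1) / 2 + 1),
        (((2 * k).choose k : ℚ)) ^ 2 / (16 ^ k * (k + 1 : ℚ)) * H k) : ℚ) : ZMod p) =
      ((4 * (1 - (-1 : ℚ) ^ ((p - 1) / 2)) : ℚ) : ZMod p) := by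
  have hodd : p % 2 = 1 := by
    rcases Nat.Prime.eq_two_or_odd hp.out with h | h
    · omega
    · exact h
  set m : ℕ := (p - 1) / 2 with hmdef
  have hm : p = 2*m + 1 := by omega
  have hm2 : 2 ≤ m := by omega
  -- basic nonvanishing
  have h2nz : (2 : ZMod p) ≠ 0 := by
    have := nz_of_lt (p := p) (j := 2) (by omega) (by omega)
    push_cast at this; exact this
  have h16nz : (16 : ZMod p) ≠ 0 := by
    have : (16 : ZMod p) = 2^4 := by norm_num
    rw [this]
    exact pow_ne_zero _ h2nz
  have hfacnz : ((m.factorial : ℕ) : ZMod p) ≠ 0 := by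
    rw [Ne, ZMod.natCast_eq_zero_iff]
    intro hd
    have := (Nat.Prime.dvd_factorial hp.out).mp hd
    omega
  -- integer data
  set A : ℕ := ∑ j ∈ Finset.range m, m.factorial / (j+1) with hAdef
  set B : ℕ := ∑ k ∈ Finset.range (m+1), ((2*k).choose k)^2 * 16^(m-k) with hBdef
  set b : ℤ := 16^(m+1) * m.factorial with hbdef
  set a : ℤ := 4*(m+1)*((2*(m+1)).choose (m+1))^2 * A - 64 * B * m.factorial
      + 4 * 16^(m+1) * m.factorial with hadef
  have hA : (A : ℚ) = (m.factorial : ℚ) * H m := by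
    rw [hAdef, H, Finset.mul_sum]
    push_cast
    refine Finset.sum_congr rfl fun j hj => ?_
    rw [Finset.mem_range] at hj
    rw [Nat.cast_div (Nat.dvd_factorial (by omega) (by omega)) (by positivity)]
    push_cast
    ring
  have hB : (B : ℚ) = 16^m * ∑ k ∈ Finset.range (m+1), ((2*k).choose k : ℚ)^2 / 16^k := by
    rw [hBdef, Finset.mul_sum]
    push_cast
    refine Finset.sum_congr rfl fun k hk => ?_
    rw [Finset.mem_range] at hk
    rw [pow_sub₀ (16:ℚ) (by norm_num) (by omega)]
    field_simp
  have hkey : (∑ k ∈ Finset.range (m + 1),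
      (((2 * k).choose k : ℚ)) ^ 2 / (16 ^ k * (k + 1 : ℚ)) * H k) * (b : ℚ) = (a : ℚ) := by
    rw [qid m, hbdef, hadef]
    push_cast
    rw [hA, hB]
    have h16 : (16:ℚ)^(m+1) ≠ 0 := by positivity
    field_simp
    ring
  have hbnz : ((b : ℤ) : ZMod p) ≠ 0 := by
    rw [hbdef]
    push_cast
    exact mul_ne_zero (pow_ne_zero _ h16nz) hfacnz
  rw [rat_cast_eq_div _ a b hbnz hkey]
  -- compute a mod p
  have hC0 : (((2*(m+1)).choose (m+1) : ℕ) : ZMod p) = 0 := by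
    rw [ZMod.natCast_eq_zero_iff]
    have h1 : (2*(m+1)).choose (m+1) = (2*m+1).choose m + (2*m+1).choose (m+1) := by
      rw [show 2*(m+1) = (2*m+1)+1 by ring]
      exact Nat.choose_succ_succ (2*m+1) m
    rw [h1, ← hm]
    exact Nat.dvd_add
      (Nat.Prime.dvd_choose_self hp.out (by omega) (by omega))
      (Nat.Prime.dvd_choose_self hp.out (by omega) (by omega))
  have hBz : ((B : ℕ) : ZMod p) = 16^m * (-1)^m := by
    rw [hBdef]
    push_cast
    have : ∀ k ∈ Finset.range (m+1),
        ((2*k).choose k : ZMod p)^2 * 16^(m-k) = (m.choose k : ZMod p)^2 * 16^m := by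
      intro k hk
      rw [Finset.mem_range] at hk
      have h16k : (16 : ZMod p)^k * 16^(m-k) = 16^m := by
        rw [← pow_add, Nat.add_sub_cancel' (by omega : k ≤ m)]
      rw [Z1 m hm k (by omega)]
      rw [mul_pow, ← pow_mul, mul_comm k 2, pow_mul,
        show ((-4:ZMod p))^2 = 16 from by norm_num]
      linear_combination (m.choose k : ZMod p)^2 * h16k
    rw [Finset.sum_congr rfl this, ← Finset.sum_mul]
    have hZ2 : (∑ k ∈ Finset.range (m+1), (m.choose k : ZMod p)^2) = ((2*m).choose m : ZMod p) := by
      have := congrArg (Nat.cast : ℕ → ZMod p) (Z2 m)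
      push_cast at this
      exact this.symm
    rw [hZ2, Z3 m hm m (by omega)]
    ring
  have haz : ((a : ℤ) : ZMod p) = (4 - 4*(-1:ZMod p)^m) * ((b : ℤ) : ZMod p) := by
    rw [hadef, hbdef]
    push_cast
    rw [hC0, hBz]
    ring
  rw [haz, mul_div_assoc, div_self hbnz, mul_one]
  -- RHS
  rcases Nat.even_or_odd m with he | ho
  · have hq : ((4 * (1 - (-1 : ℚ) ^ m) : ℚ)) = (0 : ℚ) := by
      rw [he.neg_one_pow]; ring
    rw [hq, Rat.cast_zero, he.neg_one_pow]
    ring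
  · have hq : ((4 * (1 - (-1 : ℚ) ^ m) : ℚ)) = (8 : ℚ) := by
      rw [ho.neg_one_pow]; ring
    rw [hq, show ((8:ℚ):ZMod p) = 8 from by norm_num, ho.neg_one_pow]
    ring
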